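/- Let c: [0,∞) → X be a geodesic ray to η ≠ ξ as above. Then the sequence {c(t_n)} with t_n → ∞ is a Cauchy sequence in the uniformized metric d_ε: for t_m ≥ t_n sufficiently large, d_ε(c(t_n), c(t_m)) ≤ (1/ε) e^{ε[d(o,o') + 2(ξ|η)_o + 8δ]} e^{−εt_n}. -/

import Mathlib

open Filter Set Metric Real MeasureTheory

noncomputable section

/-- The Gromov product `(x|y)_o`. -/
def gp {X : Type*} [MetricSpace X] (o x y : X) : ℝ :=
  (dist x o + dist y o - dist x y) / 2

/-- A Gromov sequence (converging to a point of the boundary at infinity). -/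
def IsGromovSeq {X : Type*} [MetricSpace X] (o : X) (s : ℕ → X) : Prop :=
  ∀ N : ℝ, ∃ I : ℕ, ∀ i j : ℕ, I ≤ i → I ≤ j → N ≤ gp o (s i) (s j)

/-- Equivalence of Gromov sequences. -/
def GromovEquiv {X : Type*} [MetricSpace X] (o : X) (s t : ℕ → X) : Prop :=
  Tendsto (fun n => gp o (s n) (t n)) atTop atTop

/-- Extended Gromov product `(x|ξ)_w` of a point `x` with the boundary point `ξ`
represented by the Gromov sequence `s`. -/
def egp {X : Type*} [MetricSpace X] (w x : X) (s : ℕ → X) : ℝ :=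
  sInf {r | ∃ t : ℕ → X, GromovEquiv w s t ∧ r = liminf (fun n => gp w x (t n)) atTop}

/-- Extended Gromov product `(ξ|η)_w` of two boundary points represented by Gromov
sequences `s` and `t`. -/
def egp2 {X : Type*} [MetricSpace X] (w : X) (s t : ℕ → X) : ℝ :=
  sInf {r | ∃ s' t' : ℕ → X, GromovEquiv w s s' ∧ GromovEquiv w t t' ∧
    r = liminf (fun n => gp w (s' n) (t' n)) atTop}

/-- The Busemann function based at the boundary point represented by `s`, with base point `o`:
`b(x) = (ξ|o)_x - (ξ|x)_o`. -/
def busemann {X : Type*} [MetricSpace X] (o : X) (s : ℕ → X) (x : X) : ℝ :=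
  egp x o s - egp o x s

/-- `δ`-hyperbolicity in the sense of Gromov. -/
def IsDeltaHyp (X : Type*) [MetricSpace X] (δ : ℝ) : Prop :=
  ∀ o x y z : X, min (gp o x z) (gp o z y) - δ ≤ gp o x y

/-- A geodesic metric space: every pair of points is joined by a geodesic. -/
def GeodesicSpace (X : Type*) [MetricSpace X] : Prop :=
  ∀ x y : X, ∃ γ : ℝ → X, γ 0 = x ∧ γ (dist x y) = y ∧
    ∀ a ∈ Icc (0:ℝ) (dist x y), ∀ b ∈ Icc (0:ℝ) (dist x y), dist (γ a) (γ b) = |a - b|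

/-- The conformally deformed distance `d_ε(x,y) = inf ∫_γ ρ ds`, the infimum being taken
over (arclength parametrized, i.e. 1-Lipschitz) curves joining `x` and `y`. -/
def confDist {X : Type*} [MetricSpace X] (ρ : X → ℝ) (x y : X) : ℝ :=
  sInf {r | ∃ T : ℝ, ∃ γ : ℝ → X, 0 ≤ T ∧ γ 0 = x ∧ γ T = y ∧
    (∀ a ∈ Icc (0:ℝ) T, ∀ b ∈ Icc (0:ℝ) T, dist (γ a) (γ b) ≤ |a - b|) ∧
    r = ∫ t in (0:ℝ)..T, ρ (γ t)}

/-- The distance of `x` to the metric boundary of the conformally deformed space: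
the infimum of the `ρ`-lengths of (arclength parametrized) curves starting at `x` and
leaving every bounded set. -/
def confBdryDist {X : Type*} [MetricSpace X] (ρ : X → ℝ) (x : X) : ℝ :=
  sInf {r | ∃ γ : ℝ → X, γ 0 = x ∧
    (∀ a b : ℝ, 0 ≤ a → 0 ≤ b → dist (γ a) (γ b) ≤ |a - b|) ∧
    Tendsto (fun t => dist x (γ t)) atTop atTop ∧
    r = ∫ t in Ioi (0:ℝ), ρ (γ t)}

/-- The quasihyperbolic metric of the conformally deformed space `(X, d_ε)`:
`k_ε(x,y) = inf ∫_γ ρ(z)/d_ε(z) ds`, over (d-arclength parametrized) curves. -/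
def confQhDist {X : Type*} [MetricSpace X] (ρ : X → ℝ) (x y : X) : ℝ :=
  sInf {r | ∃ T : ℝ, ∃ γ : ℝ → X, 0 ≤ T ∧ γ 0 = x ∧ γ T = y ∧
    (∀ a ∈ Icc (0:ℝ) T, ∀ b ∈ Icc (0:ℝ) T, dist (γ a) (γ b) ≤ |a - b|) ∧
    r = ∫ t in (0:ℝ)..T, ρ (γ t) / confBdryDist ρ (γ t)}

/-- `X` is `K`-roughly starlike with respect to the boundary point represented by the
Gromov sequence `s`: every point of `X` lies within distance `K` of a geodesic line
emanating from that boundary point. -/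
def RoughlyStarlikeAt {X : Type*} [MetricSpace X] (o : X) (s : ℕ → X) (K : ℝ) : Prop :=
  ∀ x : X, ∃ γ : ℝ → X, (∀ a b : ℝ, dist (γ a) (γ b) = |a - b|) ∧
    GromovEquiv o s (fun n => γ (-(n : ℝ))) ∧ ∃ t : ℝ, dist x (γ t) ≤ K
section Basics

variable {X : Type*} [MetricSpace X]

lemma gp_nonneg (o x y : X) : 0 ≤ gp o x y := by
  have := dist_triangle x o y
  unfold gp
  rw [dist_comm o y] at this
  linarith

lemma gp_le_left (o x y : X) : gp o x y ≤ dist x o := by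
  have := dist_triangle y x o
  unfold gp
  rw [dist_comm y x] at this
  linarith

lemma gp_le_right (o x y : X) : gp o x y ≤ dist y o := by
  have := dist_triangle x y o
  unfold gp
  linarith

lemma gp_comm (o x y : X) : gp o x y = gp o y x := by
  unfold gp; rw [dist_comm x y]; ring

lemma gp_self (o x : X) : gp o x x = dist x o := by
  unfold gp; simp

lemma gp_swap (o x y : X) : gp x o y = dist x o - gp o x y := by
  unfold gp
  rw [dist_comm o x, dist_comm y x, dist_comm y o, dist_comm o y, dist_comm x y]
  ring

/-- gp is 1-Lipschitz in the base point. -/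
lemma gp_base_le (o w x y : X) : gp o x y ≤ gp w x y + dist o w := by
  have h1 := dist_triangle x w o
  have h2 := dist_triangle y w o
  have h1' := dist_triangle x o w
  have h2' := dist_triangle y o w
  unfold gp
  rw [dist_comm w o] at h1 h2
  linarith

/-- gp is 1-Lipschitz in the second argument. -/
lemma gp_arg_le (o x x' y : X) : gp o x y ≤ gp o x' y + dist x x' := by
  have h1 := dist_triangle x x' o
  have h2 := dist_triangle x' x y
  unfold gp
  rw [dist_comm x' x] at h2
  linarith

end Basics
section Helpers

open Filter

lemma le_liminf_dense {g : ℕ → ℝ} {L : ℝ}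
    (hg : Filter.IsCoboundedUnder (· ≥ ·) Filter.atTop g)
    (h : ∀ b < L, ∀ᶠ n in Filter.atTop, b ≤ g n) : L ≤ Filter.liminf g Filter.atTop := by
  by_contra hc
  push_neg at hc
  obtain ⟨b, hb1, hb2⟩ := exists_between hc
  exact absurd (Filter.le_liminf_of_le hg (h b hb2)) (not_le.mpr hb1)

lemma limsup_le_dense {g : ℕ → ℝ} {L : ℝ}
    (hg : Filter.IsCoboundedUnder (· ≤ ·) Filter.atTop g)
    (h : ∀ b, L < b → ∀ᶠ n in Filter.atTop, g n ≤ b) : Filter.limsup g Filter.atTop ≤ L := by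
  by_contra hc
  push_neg at hc
  obtain ⟨b, hb1, hb2⟩ := exists_between hc
  exact absurd (Filter.limsup_le_of_le hg (h b hb1)) (not_le.mpr hb2)

variable {X : Type*} [MetricSpace X]

lemma bddAbove_gp (o x : X) (u : ℕ → X) :
    Filter.IsBoundedUnder (· ≤ ·) Filter.atTop (fun n => gp o x (u n)) :=
  Filter.isBoundedUnder_of ⟨dist x o, fun n => gp_le_left _ _ _⟩

lemma bddBelow_gp (o x : X) (u : ℕ → X) :
    Filter.IsBoundedUnder (· ≥ ·) Filter.atTop (fun n => gp o x (u n)) :=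
  Filter.isBoundedUnder_of ⟨0, fun n => gp_nonneg _ _ _⟩

lemma cobddBelow_gp (o x : X) (u : ℕ → X) :
    Filter.IsCoboundedUnder (· ≥ ·) Filter.atTop (fun n => gp o x (u n)) :=
  (bddAbove_gp o x u).isCoboundedUnder_ge

lemma cobddAbove_gp (o x : X) (u : ℕ → X) :
    Filter.IsCoboundedUnder (· ≤ ·) Filter.atTop (fun n => gp o x (u n)) :=
  (bddBelow_gp o x u).isCoboundedUnder_le

lemma gromovEquiv_symm {o : X} {s t : ℕ → X} (h : GromovEquiv o s t) : GromovEquiv o t s :=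
  Filter.Tendsto.congr (fun n => gp_comm o (s n) (t n)) h

lemma gromovEquiv_base {o : X} (w : X) {s t : ℕ → X} (h : GromovEquiv o s t) :
    GromovEquiv w s t := by
  apply Filter.tendsto_atTop_mono (fun n => ?_)
    (Filter.tendsto_atTop_add_const_right Filter.atTop (-(dist o w)) h)
  have := gp_base_le o w (s n) (t n)
  linarith

lemma gromovEquiv_self {o : X} {s : ℕ → X} (hs : IsGromovSeq o s) : GromovEquiv o s s := by
  rw [GromovEquiv, Filter.tendsto_atTop]
  intro b
  obtain ⟨I, hI⟩ := hs b
  exact Filter.eventually_atTop.mpr ⟨I, fun n hn => hI n n hn hn⟩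

lemma gp_joint {δ : ℝ} (hδ : 0 ≤ δ) {X : Type*} [MetricSpace X] (hhyp : IsDeltaHyp X δ)
    {o : X} {s a b : ℕ → X} (hs : IsGromovSeq o s)
    (ha : GromovEquiv o s a) (hb : GromovEquiv o s b) (N : ℝ) :
    ∃ I : ℕ, ∀ i j : ℕ, I ≤ i → I ≤ j → N ≤ gp o (a i) (b j) := by
  obtain ⟨I1, hI1⟩ := hs (N + 2*δ)
  obtain ⟨I2, hI2⟩ := Filter.eventually_atTop.mp (ha.eventually_ge_atTop (N + 2*δ))
  obtain ⟨I3, hI3⟩ := Filter.eventually_atTop.mp (hb.eventually_ge_atTop (N + 2*δ))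
  refine ⟨max I1 (max I2 I3), fun i j hi hj => ?_⟩
  have hi1 : I1 ≤ i := le_trans (le_max_left _ _) hi
  have hj1 : I1 ≤ j := le_trans (le_max_left _ _) hj
  have hi2 : I2 ≤ i := le_trans (le_trans (le_max_left _ _) (le_max_right _ _)) hi
  have hj3 : I3 ≤ j := le_trans (le_trans (le_max_right _ _) (le_max_right _ _)) hj
  have h1 : N + 2*δ ≤ gp o (a i) (s i) := by rw [gp_comm]; exact hI2 i hi2
  have h2 : N + 2*δ ≤ gp o (s i) (s j) := hI1 i j hi1 hj1
  have h3 : N + 2*δ ≤ gp o (s j) (b j) := hI3 j hj3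
  have hy1 := hhyp o (s i) (b j) (s j)
  have hy2 := hhyp o (a i) (b j) (s i)
  have h4 : N + δ ≤ gp o (s i) (b j) := by
    have := le_min h2 h3
    linarith
  have h5 : N + δ ≤ min (gp o (a i) (s i)) (gp o (s i) (b j)) :=
    le_min (by linarith) h4
  linarith

end Helpers
section Egp

open Filter

variable {X : Type*} [MetricSpace X]

lemma egp_bddBelow (o x : X) (s : ℕ → X) :
    BddBelow {r | ∃ t : ℕ → X, GromovEquiv o s t ∧
      r = Filter.liminf (fun n => gp o x (t n)) Filter.atTop} := by
  refine ⟨0, fun r hr => ?_⟩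
  obtain ⟨u, hu, rfl⟩ := hr
  exact Filter.le_liminf_of_le (cobddBelow_gp o x u)
    (Filter.Eventually.of_forall fun n => gp_nonneg _ _ _)

lemma egp_le_liminf {o x : X} {s t' : ℕ → X} (ht' : GromovEquiv o s t') :
    egp o x s ≤ Filter.liminf (fun n => gp o x (t' n)) Filter.atTop :=
  csInf_le (egp_bddBelow o x s) ⟨t', ht', rfl⟩

lemma egp_nonneg {o : X} (x : X) {s : ℕ → X} (hs : IsGromovSeq o s) : 0 ≤ egp o x s := by
  refine le_csInf ⟨_, s, gromovEquiv_self hs, rfl⟩ ?_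
  rintro r ⟨u, hu, rfl⟩
  exact Filter.le_liminf_of_le (cobddBelow_gp o x u)
    (Filter.Eventually.of_forall fun n => gp_nonneg _ _ _)

lemma limsup_le_egp_add {δ : ℝ} (hδ : 0 ≤ δ) (hhyp : IsDeltaHyp X δ)
    {o x : X} {s t' : ℕ → X} (hs : IsGromovSeq o s) (ht' : GromovEquiv o s t') :
    Filter.limsup (fun n => gp o x (t' n)) Filter.atTop ≤ egp o x s + δ := by
  have main : Filter.limsup (fun n => gp o x (t' n)) Filter.atTop - δ ≤ egp o x s := by
    refine le_csInf ⟨_, s, gromovEquiv_self hs, rfl⟩ ?_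
    rintro r ⟨t'', ht'', rfl⟩
    obtain ⟨I, hI⟩ := gp_joint hδ hhyp hs ht' ht'' (dist x o + 1)
    have key : ∀ i, I ≤ i →
        gp o x (t' i) ≤ Filter.liminf (fun n => gp o x (t'' n)) Filter.atTop + δ := by
      intro i hi
      have hlow : ∀ j, I ≤ j → gp o x (t' i) - δ ≤ gp o x (t'' j) := by
        intro j hj
        have hy := hhyp o x (t'' j) (t' i)
        have hmin : min (gp o x (t' i)) (gp o (t' i) (t'' j)) = gp o x (t' i) :=
          min_eq_left (le_trans (gp_le_left o x (t' i))
            (le_trans (by linarith) (hI i j hi hj)))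
        rw [hmin] at hy
        linarith
      have := Filter.le_liminf_of_le (cobddBelow_gp o x t'')
        (Filter.eventually_atTop.mpr ⟨I, hlow⟩)
      linarith
    have := Filter.limsup_le_of_le (cobddAbove_gp o x t')
      (Filter.eventually_atTop.mpr ⟨I, key⟩)
    linarith
  linarith

lemma busemann_ge {δ : ℝ} (hδ : 0 ≤ δ) (hhyp : IsDeltaHyp X δ)
    {o : X} (x : X) {s : ℕ → X} (hs : IsGromovSeq o s) :
    dist x o - 2 * egp o x s - δ ≤ busemann o s x := by
  have key : dist x o - egp o x s - δ ≤ egp x o s := by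
    refine le_csInf ⟨_, s, gromovEquiv_base x (gromovEquiv_self hs), rfl⟩ ?_
    rintro r ⟨t', ht', rfl⟩
    have ht'o : GromovEquiv o s t' := gromovEquiv_base o ht'
    have hls := limsup_le_egp_add (x := x) hδ hhyp hs ht'o
    have heq : (fun n => gp x o (t' n)) = (fun n => dist x o - gp o x (t' n)) := by
      funext n; exact gp_swap o x (t' n)
    rw [heq]
    apply le_liminf_dense
    · exact (Filter.isBoundedUnder_of
        ⟨dist x o, fun n => by linarith [gp_nonneg o x (t' n)]⟩).isCoboundedUnder_ge
    · intro b hb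
      have h2 : Filter.limsup (fun n => gp o x (t' n)) Filter.atTop < dist x o - b := by
        linarith
      filter_upwards [Filter.eventually_lt_of_limsup_lt h2 (bddAbove_gp o x t')] with n hn
      linarith
  unfold busemann
  linarith

end Egp
section RayEst

open Filter

variable {X : Type*} [MetricSpace X]

lemma ray_dist_ge {c : ℝ → X} (o : X)
    (hray : ∀ a a' : ℝ, 0 ≤ a → 0 ≤ a' → dist (c a) (c a') = |a - a'|)
    {t : ℝ} (htt : 0 ≤ t) : t - dist o (c 0) ≤ dist (c t) o := by
  have h0 : dist (c t) (c 0) = t := by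
    rw [hray t 0 htt le_rfl]; simp [abs_of_nonneg htt]
  have := dist_triangle (c t) o (c 0)
  rw [h0] at this
  rw [dist_comm o (c 0)] at this ⊢
  linarith

lemma ray_gp_ge {c : ℝ → X} (o : X)
    (hray : ∀ a a' : ℝ, 0 ≤ a → 0 ≤ a' → dist (c a) (c a') = |a - a'|)
    {t u : ℝ} (htt : 0 ≤ t) (htu : t ≤ u) :
    t - dist o (c 0) ≤ gp o (c t) (c u) := by
  have hu : 0 ≤ u := le_trans htt htu
  have h1 := ray_dist_ge o hray htt
  have h2 := ray_dist_ge o hray hu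
  have h3 : dist (c t) (c u) = u - t := by
    rw [hray t u htt hu, abs_of_nonpos (by linarith)]; ring
  unfold gp
  rw [h3]
  linarith

lemma freq_bound {δ : ℝ} (hδ : 0 ≤ δ) (hhyp : IsDeltaHyp X δ) {o : X} {s t : ℕ → X}
    {b : ℝ} (hb : ∃ᶠ n in Filter.atTop, gp o (s n) (t n) < b)
    {s' t' : ℕ → X} (hs' : GromovEquiv o s s') (ht' : GromovEquiv o t t') :
    ∃ᶠ n in Filter.atTop, gp o (s' n) (t' n) ≤ b + 2*δ := by
  by_contra hcon
  rw [Filter.not_frequently] at hcon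
  have hev : ∀ᶠ n in Filter.atTop, b ≤ gp o (s n) (t n) := by
    filter_upwards [hcon, hs'.eventually_ge_atTop (b + 2*δ),
      ht'.eventually_ge_atTop (b + 2*δ)] with n h1 h2 h3
    push_neg at h1
    have hy1 := hhyp o (s n) (t n) (s' n)
    have hy2 := hhyp o (s' n) (t n) (t' n)
    have h3' : b + 2*δ ≤ gp o (t' n) (t n) := by rw [gp_comm]; exact h3
    have hm2 : b + δ ≤ gp o (s' n) (t n) := by
      have := le_min (le_of_lt h1) h3'
      linarith
    have hm1 : b + δ ≤ min (gp o (s n) (s' n)) (gp o (s' n) (t n)) :=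
      le_min (by linarith) hm2
    linarith
  obtain ⟨n, h1, h2⟩ := (hb.and_eventually hev).exists
  linarith

lemma cobdd_of_freq {g : ℕ → ℝ} {b : ℝ} (h : ∃ᶠ n in Filter.atTop, g n ≤ b) :
    Filter.IsCoboundedUnder (· ≥ ·) Filter.atTop g := by
  refine ⟨b, fun a ha => ?_⟩
  rw [Filter.eventually_map] at ha
  obtain ⟨n, h1, h2⟩ := (h.and_eventually ha).exists
  exact le_trans h2 h1

lemma exists_freq_bound {o : X} {s t : ℕ → X} (hne : ¬ GromovEquiv o s t) :
    ∃ b : ℝ, ∃ᶠ n in Filter.atTop, gp o (s n) (t n) < b := by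
  rw [GromovEquiv, Filter.tendsto_atTop] at hne
  push_neg at hne
  obtain ⟨b, hb⟩ := hne
  exact ⟨b, hb⟩

end RayEst
section Egp2

open Filter

variable {X : Type*} [MetricSpace X]

lemma egp2_le_b {δ : ℝ} (hδ : 0 ≤ δ) (hhyp : IsDeltaHyp X δ) {o : X} {s t : ℕ → X}
    (hs : IsGromovSeq o s) (ht : IsGromovSeq o t) {b : ℝ}
    (hb : ∃ᶠ n in Filter.atTop, gp o (s n) (t n) < b) :
    egp2 o s t ≤ b := by
  have hmem : Filter.liminf (fun n => gp o (s n) (t n)) Filter.atTop ∈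
      {r | ∃ s' t' : ℕ → X, GromovEquiv o s s' ∧ GromovEquiv o t t' ∧
        r = Filter.liminf (fun n => gp o (s' n) (t' n)) Filter.atTop} :=
    ⟨s, t, gromovEquiv_self hs, gromovEquiv_self ht, rfl⟩
  have hbdd : BddBelow {r | ∃ s' t' : ℕ → X, GromovEquiv o s s' ∧ GromovEquiv o t t' ∧
      r = Filter.liminf (fun n => gp o (s' n) (t' n)) Filter.atTop} := by
    refine ⟨0, fun r hr => ?_⟩
    obtain ⟨s', t', hs', ht', rfl⟩ := hr
    exact Filter.le_liminf_of_le
      (cobdd_of_freq ((freq_bound hδ hhyp hb hs' ht').mono fun n h => h))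
      (Filter.Eventually.of_forall fun n => gp_nonneg _ _ _)
  refine le_trans (csInf_le hbdd hmem) ?_
  exact Filter.liminf_le_of_frequently_le (hb.mono fun n h => le_of_lt h)
    (Filter.isBoundedUnder_of ⟨0, fun n => gp_nonneg _ _ _⟩)

lemma egp2_ge_min {δ : ℝ} (hδ : 0 ≤ δ) (hhyp : IsDeltaHyp X δ) {o : X} {s t : ℕ → X}
    (hs : IsGromovSeq o s) (ht : IsGromovSeq o t) {b : ℝ}
    (hb : ∃ᶠ n in Filter.atTop, gp o (s n) (t n) < b)
    {c : ℝ → X} (hray : ∀ a a' : ℝ, 0 ≤ a → 0 ≤ a' → dist (c a) (c a') = |a - a'|)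
    (hcη : GromovEquiv o t (fun n => c n)) {u : ℝ} (hu : 0 ≤ u) :
    min (egp o (c u) s) (u - dist o (c 0) - δ) - δ ≤ egp2 o s t := by
  refine le_csInf ⟨_, s, t, gromovEquiv_self hs, gromovEquiv_self ht, rfl⟩ ?_
  rintro r ⟨s', t', hs', ht', rfl⟩
  -- eventual lower bound on gp o (c u) (t' n)
  obtain ⟨I, hI⟩ := gp_joint hδ hhyp ht hcη ht' (u - dist o (c 0))
  have hev1 : ∀ᶠ n in Filter.atTop, u - dist o (c 0) - δ ≤ gp o (c u) (t' n) := by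
    filter_upwards [Filter.eventually_ge_atTop I, Filter.eventually_ge_atTop ⌈u⌉₊]
      with n hn1 hn2
    have hun : u ≤ (n : ℝ) := Nat.ceil_le.mp hn2
    have h1 : u - dist o (c 0) ≤ gp o (c u) (c n) := ray_gp_ge o hray hu hun
    have h2 : u - dist o (c 0) ≤ gp o (c n) (t' n) := hI n n hn1 hn1
    have hy := hhyp o (c u) (t' n) (c n)
    have := le_min h1 h2
    linarith
  apply le_liminf_dense (cobdd_of_freq ((freq_bound hδ hhyp hb hs' ht').mono fun n h => h))
  intro β hβ
  have hβE : β + δ < egp o (c u) s := by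
    have := min_le_left (egp o (c u) s) (u - dist o (c 0) - δ); linarith
  have hβK : β + δ < u - dist o (c 0) - δ := by
    have := min_le_right (egp o (c u) s) (u - dist o (c 0) - δ); linarith
  have hlim : β + δ < Filter.liminf (fun n => gp o (c u) (s' n)) Filter.atTop :=
    lt_of_lt_of_le hβE (egp_le_liminf hs')
  filter_upwards [Filter.eventually_lt_of_lt_liminf hlim (bddBelow_gp o (c u) s'), hev1]
    with n h1 h2
  have hy := hhyp o (s' n) (t' n) (c u)
  have h1' : β + δ ≤ gp o (s' n) (c u) := by rw [gp_comm]; linarith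
  have := le_min h1' (by linarith : β + δ ≤ gp o (c u) (t' n))
  linarith

lemma busemann_ray_ge {δ : ℝ} (hδ : 0 ≤ δ) (hhyp : IsDeltaHyp X δ) {o : X} {s t : ℕ → X}
    (hs : IsGromovSeq o s) (ht : IsGromovSeq o t) (hne : ¬ GromovEquiv o s t)
    {c : ℝ → X} (hray : ∀ a a' : ℝ, 0 ≤ a → 0 ≤ a' → dist (c a) (c a') = |a - a'|)
    (hcη : GromovEquiv o t (fun n => c n)) :
    ∃ T0 : ℝ, 0 ≤ T0 ∧ ∀ u : ℝ, T0 ≤ u →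
      u - (dist o (c 0) + 2 * egp2 o s t + 8 * δ) ≤ busemann o s (c u) := by
  obtain ⟨b, hb⟩ := exists_freq_bound hne
  refine ⟨max 0 (b + dist o (c 0) + 2*δ + 1), le_max_left _ _, fun u hu => ?_⟩
  have hu0 : 0 ≤ u := le_trans (le_max_left _ _) hu
  have hub : b + dist o (c 0) + 2*δ + 1 ≤ u := le_trans (le_max_right _ _) hu
  have hE : egp o (c u) s ≤ egp2 o s t + δ := by
    have hmin := egp2_ge_min hδ hhyp hs ht hb hray hcη hu0
    have hB := egp2_le_b hδ hhyp hs ht hb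
    rcases le_or_gt (egp o (c u) s) (u - dist o (c 0) - δ) with hle | hlt
    · rw [min_eq_left hle] at hmin; linarith
    · rw [min_eq_right (le_of_lt hlt)] at hmin; linarith
  have h1 := busemann_ge hδ hhyp (c u) hs
  have h2 := ray_dist_ge o hray hu0
  have h3 := egp2_le_b hδ hhyp hs ht hb
  linarith

end Egp2
section Lip

open Filter

lemma liminf_le_liminf_add {f g : ℕ → ℝ} {d : ℝ} (h : ∀ n, f n ≤ g n + d)
    (hg : Filter.IsCoboundedUnder (· ≥ ·) Filter.atTop g)
    (hf : Filter.IsBoundedUnder (· ≥ ·) Filter.atTop f) :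
    Filter.liminf f Filter.atTop ≤ Filter.liminf g Filter.atTop + d := by
  by_contra hc
  push_neg at hc
  obtain ⟨β, hβ1, hβ2⟩ := exists_between hc
  have hfreq : ∃ᶠ n in Filter.atTop, g n < β - d :=
    Filter.frequently_lt_of_liminf_lt hg (by linarith)
  have : Filter.liminf f Filter.atTop ≤ β :=
    Filter.liminf_le_of_frequently_le (hfreq.mono fun n hn => by linarith [h n]) hf
  linarith

variable {X : Type*} [MetricSpace X]

lemma egp_lip (o : X) {s : ℕ → X} (hs : IsGromovSeq o s) (x x' : X) :
    egp o x s ≤ egp o x' s + dist x x' := by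
  have : egp o x s - dist x x' ≤ egp o x' s := by
    refine le_csInf ⟨_, s, gromovEquiv_self hs, rfl⟩ ?_
    rintro r ⟨t', ht', rfl⟩
    have h1 : egp o x s ≤ Filter.liminf (fun n => gp o x (t' n)) Filter.atTop :=
      egp_le_liminf ht'
    have h2 := liminf_le_liminf_add (f := fun n => gp o x (t' n))
      (fun n => gp_arg_le o x x' (t' n)) (cobddBelow_gp o x' t') (bddBelow_gp o x t')
    linarith
  linarith

lemma egp_base_lip (o : X) {s : ℕ → X} (hs : IsGromovSeq o s) (x x' : X) :
    egp x o s ≤ egp x' o s + dist x x' := by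
  have : egp x o s - dist x x' ≤ egp x' o s := by
    refine le_csInf ⟨_, s, gromovEquiv_base x' (gromovEquiv_self hs), rfl⟩ ?_
    rintro r ⟨t', ht', rfl⟩
    have ht'x : GromovEquiv x s t' := gromovEquiv_base x ht'
    have h1 : egp x o s ≤ Filter.liminf (fun n => gp x o (t' n)) Filter.atTop :=
      csInf_le (egp_bddBelow x o s) ⟨t', ht'x, rfl⟩
    have h2 := liminf_le_liminf_add (f := fun n => gp x o (t' n))
      (g := fun n => gp x' o (t' n)) (d := dist x x')
      (fun n => gp_base_le x x' o (t' n))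
      ((Filter.isBoundedUnder_of ⟨dist o x', fun n => gp_le_left _ _ _⟩).isCoboundedUnder_ge)
      (Filter.isBoundedUnder_of ⟨0, fun n => gp_nonneg _ _ _⟩)
    linarith
  linarith

lemma busemann_lip (o : X) {s : ℕ → X} (hs : IsGromovSeq o s) (x x' : X) :
    |busemann o s x - busemann o s x'| ≤ 2 * dist x x' := by
  have h1 := egp_lip o hs x x'
  have h2 := egp_lip o hs x' x
  have h3 := egp_base_lip o hs x x'
  have h4 := egp_base_lip o hs x' x
  rw [dist_comm x' x] at h2 h4
  rw [abs_le]
  unfold busemann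
  constructor <;> nlinarith [dist_nonneg (x := x) (y := x')]

end Lip
section Integral

open Filter intervalIntegral

lemma exp_neg_mul_hasDeriv (ε : ℝ) (hε : 0 < ε) (v : ℝ) :
    HasDerivAt (fun w => -(1/ε) * Real.exp (-(ε * w))) (Real.exp (-(ε * v))) v := by
  have h1 : HasDerivAt (fun w : ℝ => -(ε * w)) (-ε) v := by
    simpa using ((hasDerivAt_id v).const_mul ε).fun_neg
  have h2 := (Real.hasDerivAt_exp (-(ε * v))).comp v h1
  have h3 := h2.const_mul (-(1/ε))
  refine h3.congr_deriv ?_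
  field_simp

lemma integral_exp_neg_le {ε T : ℝ} (hε : 0 < ε) (hT : 0 ≤ T) :
    (∫ v in (0:ℝ)..T, Real.exp (-(ε * v))) ≤ 1/ε := by
  have hint : (∫ v in (0:ℝ)..T, Real.exp (-(ε * v))) =
      -(1/ε) * Real.exp (-(ε * T)) - -(1/ε) * Real.exp (-(ε * 0)) := by
    apply intervalIntegral.integral_eq_sub_of_hasDerivAt
      (fun v _ => exp_neg_mul_hasDeriv ε hε v)
    apply Continuous.intervalIntegrable
    continuity
  rw [hint]
  have h1 : 0 < Real.exp (-(ε * T)) := Real.exp_pos _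
  have h2 : Real.exp (-(ε * 0)) = 1 := by simp
  rw [h2]
  have : 0 < 1/ε := by positivity
  nlinarith

end Integral

/-- Along a geodesic ray `c` converging to a boundary point `η ≠ ξ`, the points `c(t_n)`
form a Cauchy sequence in the uniformized metric `d_ε`: for all sufficiently large
`t_n ≤ t_m`, `d_ε(c(t_n), c(t_m)) ≤ (1/ε) e^{ε[d(o,o') + 2(ξ|η)_o + 8δ]} e^{−εt_n}`,
where `o' = c(0)`. -/
theorem confDist_cauchy_along_ray {X : Type*} [MetricSpace X] [ProperSpace X]
    (δ : ℝ) (hδ : 0 ≤ δ) (hhyp : IsDeltaHyp X δ) (hgeo : GeodesicSpace X)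
    (o : X) (s t : ℕ → X) (hs : IsGromovSeq o s) (ht : IsGromovSeq o t)
    (hne : ¬ GromovEquiv o s t)
    (c : ℝ → X) (hray : ∀ a a' : ℝ, 0 ≤ a → 0 ≤ a' → dist (c a) (c a') = |a - a'|)
    (hcη : GromovEquiv o t (fun n => c n))
    (ε : ℝ) (hε : 0 < ε) :
    ∃ T : ℝ, 0 ≤ T ∧ ∀ tn tm : ℝ, T ≤ tn → tn ≤ tm →
      confDist (fun z => Real.exp (-(ε * busemann o s z))) (c tn) (c tm) ≤
        (1 / ε) * Real.exp (ε * (dist o (c 0) + 2 * egp2 o s t + 8 * δ)) *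
          Real.exp (-(ε * tn)) := by
  obtain ⟨T0, hT00, hT0⟩ := busemann_ray_ge hδ hhyp hs ht hne hray hcη
  set C := dist o (c 0) + 2 * egp2 o s t + 8 * δ with hC
  refine ⟨T0, hT00, fun tn tm htn htnm => ?_⟩
  have htn0 : 0 ≤ tn := le_trans hT00 htn
  set T := tm - tn with hTdef
  have hT0' : 0 ≤ T := by simp [hTdef]; linarith
  set ρ : X → ℝ := fun z => Real.exp (-(ε * busemann o s z)) with hρ
  set γ : ℝ → X := fun v => c (tn + v) with hγ
  -- the geodesic segment as competitor curve
  have hγ0 : γ 0 = c tn := by simp [hγ]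
  have hγT : γ T = c tm := by simp only [hγ, hTdef]; congr 1; ring
  have hγdist : ∀ a ∈ Icc (0:ℝ) T, ∀ b ∈ Icc (0:ℝ) T, dist (γ a) (γ b) ≤ |a - b| := by
    intro a ha b hb
    have := hray (tn + a) (tn + b) (by linarith [ha.1]) (by linarith [hb.1])
    simp only [hγ]
    rw [this]
    have : tn + a - (tn + b) = a - b := by ring
    rw [this]
  have hmem : (∫ v in (0:ℝ)..T, ρ (γ v)) ∈
      {r | ∃ T' : ℝ, ∃ γ' : ℝ → X, 0 ≤ T' ∧ γ' 0 = c tn ∧ γ' T' = c tm ∧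
        (∀ a ∈ Icc (0:ℝ) T', ∀ b ∈ Icc (0:ℝ) T', dist (γ' a) (γ' b) ≤ |a - b|) ∧
        r = ∫ v in (0:ℝ)..T', ρ (γ' v)} :=
    ⟨T, γ, hT0', hγ0, hγT, hγdist, rfl⟩
  have hbdd : BddBelow {r | ∃ T' : ℝ, ∃ γ' : ℝ → X, 0 ≤ T' ∧ γ' 0 = c tn ∧ γ' T' = c tm ∧
        (∀ a ∈ Icc (0:ℝ) T', ∀ b ∈ Icc (0:ℝ) T', dist (γ' a) (γ' b) ≤ |a - b|) ∧
        r = ∫ v in (0:ℝ)..T', ρ (γ' v)} := by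
    refine ⟨0, fun r hr => ?_⟩
    obtain ⟨T', γ', hT', _, _, _, rfl⟩ := hr
    exact intervalIntegral.integral_nonneg hT' fun u _ => le_of_lt (Real.exp_pos _)
  have hle1 : confDist ρ (c tn) (c tm) ≤ ∫ v in (0:ℝ)..T, ρ (γ v) := by
    unfold confDist
    exact csInf_le hbdd hmem
  -- continuity and integrability
  have hlip : LipschitzOnWith 2 (fun v => busemann o s (γ v)) (Icc (0:ℝ) T) := by
    apply LipschitzOnWith.of_dist_le_mul
    intro v hv w hw
    have hd : dist (γ v) (γ w) = |v - w| := by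
      have := hray (tn + v) (tn + w) (by linarith [hv.1]) (by linarith [hw.1])
      simp only [hγ]
      rw [this]
      congr 1
      ring
    have hbl := busemann_lip o hs (γ v) (γ w)
    rw [hd] at hbl
    have h2 : ((2:NNReal):ℝ) * dist v w = 2 * |v - w| := by rw [Real.dist_eq]; norm_num
    rw [Real.dist_eq, h2]
    exact hbl
  have hcontb : ContinuousOn (fun v => busemann o s (γ v)) (Icc (0:ℝ) T) :=
    hlip.continuousOn
  have hcont : ContinuousOn (fun v => ρ (γ v)) (Icc (0:ℝ) T) := by
    simp only [hρ]
    exact Real.continuous_exp.comp_continuousOn ((continuousOn_const.mul hcontb).neg)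
  have hint1 : IntervalIntegrable (fun v => ρ (γ v)) MeasureTheory.volume 0 T := by
    apply ContinuousOn.intervalIntegrable
    rwa [Set.uIcc_of_le hT0']
  have hint2 : IntervalIntegrable (fun v => Real.exp (ε*C - ε*tn) * Real.exp (-(ε*v)))
      MeasureTheory.volume 0 T := by
    exact (continuous_const.mul (Real.continuous_exp.comp
      ((continuous_const.mul continuous_id).neg))).intervalIntegrable _ _
  have hptw : ∀ v ∈ Icc (0:ℝ) T, ρ (γ v) ≤ Real.exp (ε*C - ε*tn) * Real.exp (-(ε*v)) := by
    intro v hv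
    have hb : tn + v - C ≤ busemann o s (c (tn + v)) := by
      have := hT0 (tn + v) (by linarith [hv.1])
      linarith
    simp only [hρ, hγ]
    rw [← Real.exp_add]
    apply Real.exp_le_exp.mpr
    nlinarith [mul_le_mul_of_nonneg_left hb hε.le]
  have hle2 := intervalIntegral.integral_mono_on hT0' hint1 hint2 hptw
  have hfac : (∫ v in (0:ℝ)..T, Real.exp (ε*C - ε*tn) * Real.exp (-(ε*v)))
      = Real.exp (ε*C - ε*tn) * ∫ v in (0:ℝ)..T, Real.exp (-(ε*v)) :=
    intervalIntegral.integral_const_mul _ _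
  have hle3 := integral_exp_neg_le hε hT0'
  have hexp : Real.exp (ε*C - ε*tn) = Real.exp (ε*C) * Real.exp (-(ε*tn)) := by
    rw [← Real.exp_add, sub_eq_add_neg]
  have hpos : (0:ℝ) < Real.exp (ε*C - ε*tn) := Real.exp_pos _
  have hfin : Real.exp (ε*C - ε*tn) * (∫ v in (0:ℝ)..T, Real.exp (-(ε*v)))
      ≤ Real.exp (ε*C - ε*tn) * (1/ε) :=
    mul_le_mul_of_nonneg_left hle3 hpos.le
  have : confDist ρ (c tn) (c tm) ≤ Real.exp (ε*C - ε*tn) * (1/ε) := by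
    rw [hfac] at hle2
    linarith
  rw [hexp] at this
  calc confDist ρ (c tn) (c tm) ≤ Real.exp (ε*C) * Real.exp (-(ε*tn)) * (1/ε) := this
    _ = 1/ε * Real.exp (ε*C) * Real.exp (-(ε*tn)) := by ring
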